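/- If C is a Z₂Z₄[ξ]-linear code of type (r,s;k₀;k₁,k₂), where ξ is a root of an irreducible polynomial of degree t, then |C| · |C⊥| = 2^{t(r + 2s)}. -/

import Mathlib

set_option synthInstance.maxHeartbeats 1000000
set_option maxHeartbeats 2000000
set_option linter.unusedSectionVars false

noncomputable section
open Polynomial

abbrev Z4 : Type := ZMod 4
abbrev Z2 : Type := ZMod 2

/-- The mod 2 reduction map `Z₄ → Z₂`. -/
def bar : Z4 →+* Z2 := ZMod.castHom (m := 2) (by norm_num) Z2

/-- The ring `R₄ = Z₄[x]/⟨h⟩` (for `h` basic primitive, the Galois ring `GR(4,m)`). -/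
abbrev R4 (h : Z4[X]) : Type := Z4[X] ⧸ Ideal.span {h}

/-- The ring `R₂ = Z₂[x]/⟨h̄⟩` (for `h` basic primitive, the field `F_{2^m}`). -/
abbrev R2 (h : Z4[X]) : Type := Z2[X] ⧸ Ideal.span {h.map bar}

/-- `ξ`, the class of `x` in `R₄`. -/
def xi (h : Z4[X]) : R4 h := Ideal.Quotient.mk _ X

/-- `ξ̄`, the class of `x` in `R₂`. -/
def xibar (h : Z4[X]) : R2 h := Ideal.Quotient.mk _ X

/-- The coefficientwise mod 2 reduction `R₄ → R₂`. -/
def barR (h : Z4[X]) : R4 h →+* R2 h :=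
  Ideal.quotientMap (Ideal.span {h.map bar}) (Polynomial.mapRingHom bar)
    (by
      rw [Ideal.span_le]
      intro p hp
      simp only [Set.mem_singleton_iff] at hp
      subst hp
      exact Ideal.mem_comap.mpr (Ideal.subset_span (by simp)))

/-- The canonical representative (of degree `< deg h`) of an element of `R₄`. -/
def rep4 (h : Z4[X]) (α : R4 h) : Z4[X] := Quotient.out α %ₘ h

/-- The canonical representative (of degree `< deg h̄`) of an element of `R₂`. -/
def rep2 (h : Z4[X]) (α : R2 h) : Z2[X] := Quotient.out α %ₘ (h.map bar)

/-- The Frobenius map `θ₄ : ∑ vᵢ ξ^i ↦ ∑ vᵢ ξ^{2i}` of `R₄`, as a bare function: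
substitute `ξ²` in the canonical representative. -/
def thetaFun4 (h : Z4[X]) (α : R4 h) : R4 h := Polynomial.aeval (xi h ^ 2) (rep4 h α)

/-- The Frobenius map `θ₂ : ∑ vᵢ ξ̄^i ↦ ∑ vᵢ ξ̄^{2i}` of `R₂`, as a bare function. -/
def thetaFun2 (h : Z4[X]) (α : R2 h) : R2 h := Polynomial.aeval (xibar h ^ 2) (rep2 h α)

/-- A lift `ι : R₂ → R₄` with `ι` mod 2 the identity: lift the coefficients of the
canonical representative from `{0,1}`. -/
def iota (h : Z4[X]) (α : R2 h) : R4 h :=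
  Ideal.Quotient.mk _ ((rep2 h α).sum fun i a => C ((a.val : Z4)) * X ^ i)

/-- `h` is a monic basic primitive polynomial of degree `m`:  `h` is monic, its mod 2
reduction `h̄` is irreducible over `Z₂`, and the root `ξ̄` of `h̄` is a primitive
element, i.e. has multiplicative order `2^m - 1`. -/
def BasicPrimitive (h : Z4[X]) (m : ℕ) : Prop :=
  h.Monic ∧ h.natDegree = m ∧ Irreducible (h.map bar) ∧ orderOf (xibar h) = 2 ^ m - 1

/-- The scalar multiplication `γ * (α,β) = (γ̄α, γβ)` making `R₂^r × R₄^s` (or any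
mixed-alphabet tuple space) an `R₄`-module. -/
def smulStar (h : Z4[X]) {α β : Type*} (γ : R4 h) (v : (α → R2 h) × (β → R4 h)) :
    (α → R2 h) × (β → R4 h) :=
  (fun i => barR h γ * v.1 i, fun j => γ * v.2 j)


/-- A `Z₂Z₄[ξ]`-linear code: an `R₄`-submodule of `R₂^r × R₄^s` (as a set). -/
def IsZ2Z4Linear (h : Z4[X]) {r s : ℕ} (C : Set ((Fin r → R2 h) × (Fin s → R4 h))) : Prop :=
  0 ∈ C ∧ (∀ u ∈ C, ∀ v ∈ C, u + v ∈ C) ∧ ∀ γ : R4 h, ∀ u ∈ C, smulStar h γ u ∈ C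

/-! ### Standard generator and parity-check matrices -/

/-- The set of all `R₄`-linear combinations (via the action `*`) of a finite family of
rows in `R₂^α × R₄^β`. -/
def rowSpan (h : Z4[X]) {ι α β : Type*} [Fintype ι]
    (rows : ι → (α → R2 h) × (β → R4 h)) : Set ((α → R2 h) × (β → R4 h)) :=
  {v | ∃ c : ι → R4 h, v = ∑ i, smulStar h (c i) (rows i)}

/-- The rows of the standard form generator matrix
`G = [[I_{k₀}, Ā₀₁ | 0, 0, 2T], [0, S | I_{k₁}, A₀₁, A₀₂], [0, 0 | 0, 2I_{k₂}, 2A₁₂]]`. -/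
def stdGenRows (h : Z4[X]) {r s k0 k1 k2 : ℕ}
    (A01b : Matrix (Fin k0) (Fin (r - k0)) (R2 h))
    (S : Matrix (Fin k1) (Fin (r - k0)) (R2 h))
    (T : Matrix (Fin k0) (Fin (s - k1 - k2)) (R4 h))
    (A01 : Matrix (Fin k1) (Fin k2) (R4 h))
    (A02 : Matrix (Fin k1) (Fin (s - k1 - k2)) (R4 h))
    (A12 : Matrix (Fin k2) (Fin (s - k1 - k2)) (R4 h)) :
    (Fin k0 ⊕ Fin k1 ⊕ Fin k2) →
      ((Fin k0 ⊕ Fin (r - k0)) → R2 h) × ((Fin k1 ⊕ Fin k2 ⊕ Fin (s - k1 - k2)) → R4 h) :=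
  fun row =>
    (fun col =>
      match row, col with
      | .inl i, .inl j => if i = j then 1 else 0
      | .inl i, .inr j => A01b i j
      | .inr (.inl i), .inr j => S i j
      | _, _ => 0,
     fun col =>
      match row, col with
      | .inl i, .inr (.inr j) => 2 * T i j
      | .inr (.inl i), .inl j => if i = j then 1 else 0
      | .inr (.inl i), .inr (.inl j) => A01 i j
      | .inr (.inl i), .inr (.inr j) => A02 i j
      | .inr (.inr i), .inr (.inl j) => if i = j then 2 else 0
      | .inr (.inr i), .inr (.inr j) => 2 * A12 i j
      | _, _ => 0)

/-- `C` is (permutation equivalent to) a code of type `(r,s;k₀;k₁,k₂)`:  after a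
permutation of the first `r` and of the last `s` coordinates (encoded by the
relabelings `e2`, `e4`) the code is exactly the `R₄`-span of the rows of the standard
form generator matrix. -/
def IsTypeCode (h : Z4[X]) (r s k0 k1 k2 : ℕ)
    (C : Set ((Fin r → R2 h) × (Fin s → R4 h))) : Prop :=
  ∃ (A01b : Matrix (Fin k0) (Fin (r - k0)) (R2 h))
    (S : Matrix (Fin k1) (Fin (r - k0)) (R2 h))
    (T : Matrix (Fin k0) (Fin (s - k1 - k2)) (R4 h))
    (A01 : Matrix (Fin k1) (Fin k2) (R4 h))
    (A02 : Matrix (Fin k1) (Fin (s - k1 - k2)) (R4 h))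
    (A12 : Matrix (Fin k2) (Fin (s - k1 - k2)) (R4 h))
    (e2 : Fin r ≃ (Fin k0 ⊕ Fin (r - k0)))
    (e4 : Fin s ≃ (Fin k1 ⊕ Fin k2 ⊕ Fin (s - k1 - k2))),
    (fun v : (Fin r → R2 h) × (Fin s → R4 h) => (v.1 ∘ e2.symm, v.2 ∘ e4.symm)) '' C
      = rowSpan h (stdGenRows h A01b S T A01 A02 A12)

/-- The inner product
`⟨u,v⟩ = 2 ∑ᵢ ι(aᵢdᵢ) + ∑ⱼ bⱼeⱼ ∈ R₄` on `R₂^α × R₄^β`. -/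
def innerP (h : Z4[X]) {α β : Type*} [Fintype α] [Fintype β]
    (u v : (α → R2 h) × (β → R4 h)) : R4 h :=
  2 * ∑ i, iota h (u.1 i * v.1 i) + ∑ j, u.2 j * v.2 j

/-- The dual code `C⊥ = {v : ⟨u,v⟩ = 0 for all u ∈ C}`. -/
def dualCode (h : Z4[X]) {α β : Type*} [Fintype α] [Fintype β]
    (C : Set ((α → R2 h) × (β → R4 h))) : Set ((α → R2 h) × (β → R4 h)) :=
  {v | ∀ u ∈ C, innerP h u v = 0}

/-- The rows of the standard form parity-check matrix
`H = [[−Ā₀₁ᵀ, I_{r−k₀} | −2Sᵀ, 0, 0], [−Tᵀ, 0 | −A₀₂ᵀ + A₁₂ᵀA₀₁ᵀ, −A₁₂ᵀ, I_{s−k₁−k₂}],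
[0, 0 | −2A₀₁ᵀ, 2I_{k₂}, 0]]`. -/
def stdParityRows (h : Z4[X]) {r s k0 k1 k2 : ℕ}
    (A01b : Matrix (Fin k0) (Fin (r - k0)) (R2 h))
    (S : Matrix (Fin k1) (Fin (r - k0)) (R2 h))
    (T : Matrix (Fin k0) (Fin (s - k1 - k2)) (R4 h))
    (A01 : Matrix (Fin k1) (Fin k2) (R4 h))
    (A02 : Matrix (Fin k1) (Fin (s - k1 - k2)) (R4 h))
    (A12 : Matrix (Fin k2) (Fin (s - k1 - k2)) (R4 h)) :
    (Fin (r - k0) ⊕ Fin (s - k1 - k2) ⊕ Fin k2) →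
      ((Fin k0 ⊕ Fin (r - k0)) → R2 h) × ((Fin k1 ⊕ Fin k2 ⊕ Fin (s - k1 - k2)) → R4 h) :=
  fun row =>
    (fun col =>
      match row, col with
      | .inl i, .inl j => -(A01b j i)
      | .inl i, .inr j => if i = j then 1 else 0
      | .inr (.inl i), .inl j => -(barR h (T j i))
      | _, _ => 0,
     fun col =>
      match row, col with
      | .inl i, .inl j => -(2 * iota h (S j i))
      | .inr (.inl i), .inl j => -(A02 j i) + ∑ c, A12 c i * A01 j c
      | .inr (.inl i), .inr (.inl j) => -(A12 j i)
      | .inr (.inl i), .inr (.inr j) => if i = j then 1 else 0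
      | .inr (.inr i), .inl j => -(2 * A01 j i)
      | .inr (.inr i), .inr (.inl j) => if i = j then 2 else 0
      | _, _ => 0)


/-! ### Auxiliary lemmas -/

section Aux

variable {h : Z4[X]}

lemma bar_surjective : Function.Surjective bar := by
  intro b
  fin_cases b
  · exact ⟨0, map_zero bar⟩
  · exact ⟨1, map_one bar⟩

lemma poly_half {p : Z4[X]} (hp : ∀ i, ∃ d : Z4, p.coeff i = 2 * d) :
    ∃ w : Z4[X], p = 2 * w := by
  refine ⟨p.sum fun i a => C (if a = 2 then 1 else 0) * X ^ i, ?_⟩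
  conv_lhs => rw [← p.sum_C_mul_X_pow_eq]
  rw [Polynomial.sum, Polynomial.sum, Finset.mul_sum]
  refine Finset.sum_congr rfl fun i _ => ?_
  obtain ⟨d, hd⟩ := hp i
  have key : ∀ c d : Z4, c = 2 * d → c = 2 * (if c = 2 then 1 else 0) := by decide
  rw [← mul_assoc]
  congr 1
  rw [← map_ofNat (C : Z4 →+* Z4[X]) 2, ← map_mul]
  exact congrArg C (key _ _ hd)

lemma exists_eq_two_mul_of_map_bar_eq_zero {p : Z4[X]} (hp : p.map bar = 0) :
    ∃ w, p = 2 * w := by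
  refine poly_half fun i => ?_
  have : bar (p.coeff i) = 0 := by
    rw [← Polynomial.coeff_map, hp, Polynomial.coeff_zero]
  revert this
  generalize p.coeff i = c
  revert c; decide

lemma exists_eq_two_mul_of_two_eq_zero_poly {p : Z4[X]} (hp : 2 * p = 0) :
    ∃ w, p = 2 * w := by
  refine poly_half fun i => ?_
  have : (2 : Z4) * p.coeff i = 0 := by
    have := congrArg (fun q : Z4[X] => q.coeff i) hp
    simpa [Polynomial.coeff_ofNat_mul] using this
  revert this
  generalize p.coeff i = c
  revert c; decide

lemma barR_mk (p : Z4[X]) :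
    barR h (Ideal.Quotient.mk _ p) = Ideal.Quotient.mk _ (p.map bar) := by
  rw [barR, Ideal.quotientMap_mk, Polynomial.coe_mapRingHom]

lemma mk_h_eq_zero : (Ideal.Quotient.mk (Ideal.span {h}) h : R4 h) = 0 := by
  rw [Ideal.Quotient.eq_zero_iff_mem]
  exact Ideal.subset_span rfl

lemma exists_two_of_barR_eq_zero {x : R4 h} (hx : barR h x = 0) :
    ∃ y, x = 2 * y := by
  obtain ⟨p, rfl⟩ := Ideal.Quotient.mk_surjective x
  rw [barR_mk, Ideal.Quotient.eq_zero_iff_mem, Ideal.mem_span_singleton] at hx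
  obtain ⟨qb, hqb⟩ := hx
  obtain ⟨q, rfl⟩ := Polynomial.map_surjective bar bar_surjective qb
  have h0 : (p - h * q).map bar = 0 := by
    rw [Polynomial.map_sub, Polynomial.map_mul, hqb]; ring
  obtain ⟨w, hw⟩ := exists_eq_two_mul_of_map_bar_eq_zero h0
  refine ⟨Ideal.Quotient.mk _ w, ?_⟩
  have h1 : p = 2 * w + h * q := by linear_combination hw
  rw [h1, map_add, map_mul, map_mul, mk_h_eq_zero, map_ofNat]
  ring

lemma two_Z2X : (2 : Z2[X]) = 0 := by
  rw [← map_ofNat (C : Z2 →+* Z2[X]) 2, show (2 : Z2) = 0 from by decide, map_zero]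

lemma exists_two_of_two_eq_zero (hm : h.Monic) {x : R4 h} (hx : 2 * x = 0) :
    ∃ y, x = 2 * y := by
  obtain ⟨p, rfl⟩ := Ideal.Quotient.mk_surjective x
  have h2 : (Ideal.Quotient.mk (Ideal.span {h}) (2 * p) : R4 h) = 0 := by
    rw [map_mul, map_ofNat]
    exact hx
  rw [Ideal.Quotient.eq_zero_iff_mem, Ideal.mem_span_singleton] at h2
  obtain ⟨q, hq⟩ := h2
  have hbar : (h.map bar) * (q.map bar) = 0 := by
    rw [← Polynomial.map_mul, ← hq, Polynomial.map_mul]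
    simp [two_Z2X]
  have hq0 : q.map bar = 0 := by
    rcases mul_eq_zero.mp hbar with h' | h'
    · exact absurd h' (hm.map bar).ne_zero
    · exact h'
  obtain ⟨q', hq'⟩ := exists_eq_two_mul_of_map_bar_eq_zero hq0
  have h3 : 2 * (p - h * q') = 0 := by
    linear_combination hq + h * hq' 
  obtain ⟨w, hw⟩ := exists_eq_two_mul_of_two_eq_zero_poly h3
  refine ⟨Ideal.Quotient.mk _ w, ?_⟩
  have h4 : p = 2 * w + h * q' := by linear_combination hw
  rw [h4, map_add, map_mul, map_mul, mk_h_eq_zero, map_ofNat]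
  ring

end Aux


section Aux2

variable {h : Z4[X]}

lemma mk_rep2 (hm : h.Monic) (a : R2 h) : Ideal.Quotient.mk _ (rep2 h a) = a := by
  have hmb : (h.map bar).Monic := hm.map bar
  rw [rep2, Polynomial.modByMonic_eq_sub_mul_div _ (h.map bar), map_sub, map_mul,
    show (Ideal.Quotient.mk (Ideal.span {h.map bar}) (h.map bar)) = 0 from by
      rw [Ideal.Quotient.eq_zero_iff_mem]; exact Ideal.subset_span rfl,
    zero_mul, sub_zero]
  exact Quotient.out_eq a

lemma barR_iota (hm : h.Monic) (a : R2 h) : barR h (iota h a) = a := by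
  rw [iota, barR_mk]
  have key : ((rep2 h a).sum fun i c => C ((c.val : Z4)) * X ^ i).map bar = rep2 h a := by
    rw [Polynomial.sum, Polynomial.map_sum]
    have step : ∀ i ∈ (rep2 h a).support,
        (C ((((rep2 h a).coeff i).val : Z4)) * X ^ i).map bar
          = C ((rep2 h a).coeff i) * X ^ i := by
      intro i _
      rw [Polynomial.map_mul, Polynomial.map_C, Polynomial.map_pow, Polynomial.map_X]
      congr 2
      rw [map_natCast bar]
      simp [ZMod.natCast_val, ZMod.cast_id]
    rw [Finset.sum_congr rfl step]
    conv_rhs => rw [← (rep2 h a).sum_C_mul_X_pow_eq]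
    rfl
  rw [key]
  exact mk_rep2 hm a

lemma two_mul_two_R4 : (2 : R4 h) * 2 = 0 := by
  rw [show ((2 : R4 h) * 2) = Ideal.Quotient.mk _ ((2 : Z4[X]) * 2) from by
        rw [map_mul, map_ofNat],
    show ((2 : Z4[X]) * 2) = (4 : Z4[X]) from by norm_num,
    ← map_ofNat (C : Z4 →+* Z4[X]) 4, show (4 : Z4) = 0 from by decide, map_zero, map_zero]

lemma two_R2 : (2 : R2 h) = 0 := by
  rw [← map_ofNat (Ideal.Quotient.mk (Ideal.span {h.map bar})) 2, two_Z2X, map_zero]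

lemma two_congr {x y : R4 h} (hxy : barR h x = barR h y) : 2 * x = 2 * y := by
  obtain ⟨z, hz⟩ := exists_two_of_barR_eq_zero (x := x - y)
    (by rw [map_sub, hxy, sub_self])
  linear_combination 2 * hz + two_mul_two_R4 * z

/-- `ti a = 2 * ι a`. -/
def ti (h : Z4[X]) (a : R2 h) : R4 h := 2 * iota h a

variable (hm : h.Monic)
include hm

lemma ti_add (a b : R2 h) : ti h (a + b) = ti h a + ti h b := by
  have : 2 * iota h (a + b) = 2 * (iota h a + iota h b) :=
    two_congr (by rw [map_add, barR_iota hm, barR_iota hm, barR_iota hm])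
  rw [ti, this, ti, ti]; ring

lemma ti_zero : ti h 0 = 0 := by
  have : 2 * iota h (0 : R2 h) = 2 * 0 := two_congr (by rw [barR_iota hm, map_zero])
  rw [ti, this]; ring

lemma ti_neg (a : R2 h) : ti h (-a) = -ti h a := by
  have : 2 * iota h (-a) = 2 * (-(iota h a)) :=
    two_congr (by rw [map_neg, barR_iota hm, barR_iota hm])
  rw [ti, this, ti]; ring

lemma ti_barR (y : R4 h) : ti h (barR h y) = 2 * y :=
  two_congr (by rw [barR_iota hm])

lemma ti_mul_barR (γ : R4 h) (a : R2 h) : ti h (barR h γ * a) = γ * ti h a := by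
  have : 2 * iota h (barR h γ * a) = 2 * (γ * iota h a) :=
    two_congr (by rw [map_mul, barR_iota hm, barR_iota hm])
  rw [ti, this, ti]; ring

lemma ti_inj {a b : R2 h} (hab : ti h a = ti h b) : a = b := by
  rw [ti, ti] at hab
  obtain ⟨y, hy⟩ := exists_two_of_two_eq_zero hm (x := iota h a - iota h b)
    (by linear_combination hab)
  have h2 := congrArg (barR h) hy
  rw [map_sub, barR_iota hm, barR_iota hm, map_mul, map_ofNat, two_R2, zero_mul] at h2
  linear_combination h2

end Aux2


section Combo

variable {h : Z4[X]} {ι α β : Type*} [Fintype ι] [Fintype α] [Fintype β]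

/-- The linear combination of rows with coefficients `d`. -/
def combo (rows : ι → (α → R2 h) × (β → R4 h)) (d : ι → R4 h) :
    (α → R2 h) × (β → R4 h) := ∑ i, smulStar h (d i) (rows i)

lemma combo_fst (rows : ι → (α → R2 h) × (β → R4 h)) (d : ι → R4 h) (a : α) :
    (combo rows d).1 a = ∑ i, barR h (d i) * (rows i).1 a := by
  rw [combo, Prod.fst_sum, Finset.sum_apply]; rfl

lemma combo_snd (rows : ι → (α → R2 h) × (β → R4 h)) (d : ι → R4 h) (b : β) :
    (combo rows d).2 b = ∑ i, d i * (rows i).2 b := by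
  rw [combo, Prod.snd_sum, Finset.sum_apply]; rfl

lemma mem_rowSpan_iff {rows : ι → (α → R2 h) × (β → R4 h)}
    {v : (α → R2 h) × (β → R4 h)} :
    v ∈ rowSpan h rows ↔ ∃ d, v = combo rows d := Iff.rfl

lemma smulStar_add (γ δ : R4 h) (v : (α → R2 h) × (β → R4 h)) :
    smulStar h (γ + δ) v = smulStar h γ v + smulStar h δ v := by
  refine Prod.ext ?_ ?_ <;> funext x <;> simp [smulStar, map_add, add_mul]

lemma smulStar_zero (v : (α → R2 h) × (β → R4 h)) : smulStar h 0 v = 0 := by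
  refine Prod.ext ?_ ?_ <;> funext x <;> simp [smulStar]

lemma smulStar_one (v : (α → R2 h) × (β → R4 h)) : smulStar h 1 v = v := by
  refine Prod.ext ?_ ?_ <;> funext x <;> simp [smulStar]

lemma combo_add (rows : ι → (α → R2 h) × (β → R4 h)) (d d' : ι → R4 h) :
    combo rows (d + d') = combo rows d + combo rows d' := by
  rw [combo, combo, combo, ← Finset.sum_add_distrib]
  exact Finset.sum_congr rfl fun i _ => by rw [Pi.add_apply, smulStar_add]

lemma smulStar_congr_tor {γ γ' : R4 h} (hb : barR h γ = barR h γ')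
    {row : (α → R2 h) × (β → R4 h)} (htor : ∀ j, ∃ z, row.2 j = 2 * z) :
    smulStar h γ row = smulStar h γ' row := by
  obtain ⟨y, hy⟩ := exists_two_of_barR_eq_zero (x := γ - γ')
    (by rw [map_sub, hb, sub_self])
  refine Prod.ext ?_ ?_
  · funext a; simp only [smulStar]; rw [hb]
  · funext j
    obtain ⟨z, hz⟩ := htor j
    simp only [smulStar]
    rw [hz]
    linear_combination (2 * z) * hy + (z * y) * two_mul_two_R4

variable {I0 I1 I2 : Type*} [Fintype I0] [Fintype I1] [Fintype I2]
  [DecidableEq I0] [DecidableEq I1] [DecidableEq I2]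

/-- Lift mixed coefficients to `R4` coefficients. -/
def liftCoef (h : Z4[X]) {I0 I1 I2 : Type*}
    (c : (I0 → R2 h) × (I1 → R4 h) × (I2 → R2 h)) : (I0 ⊕ I1 ⊕ I2) → R4 h :=
  Sum.elim (fun i => iota h (c.1 i)) (Sum.elim c.2.1 fun i => iota h (c.2.2 i))

lemma card_rowSpan (hm : h.Monic)
    (rows : (I0 ⊕ I1 ⊕ I2) → (α → R2 h) × (β → R4 h))
    (htor0 : ∀ i j, ∃ z, (rows (.inl i)).2 j = 2 * z)
    (htor2 : ∀ i j, ∃ z, (rows (.inr (.inr i))).2 j = 2 * z)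
    (q0 : I0 → α) (hq00 : ∀ i i', (rows (.inl i')).1 (q0 i) = if i' = i then 1 else 0)
    (hq0r : ∀ i ρ, (rows (.inr ρ)).1 (q0 i) = 0)
    (q1 : I1 → β) (hq10 : ∀ i i', (rows (.inl i')).2 (q1 i) = 0)
    (hq11 : ∀ i i', (rows (.inr (.inl i'))).2 (q1 i) = if i' = i then 1 else 0)
    (hq12 : ∀ i i', (rows (.inr (.inr i'))).2 (q1 i) = 0)
    (q2 : I2 → β) (hq20 : ∀ i i', (rows (.inl i')).2 (q2 i) = 0)
    (hq22 : ∀ i i', (rows (.inr (.inr i'))).2 (q2 i) = if i' = i then 2 else 0) :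
    Nat.card (rowSpan h rows)
      = Nat.card ((I0 → R2 h) × (I1 → R4 h) × (I2 → R2 h)) := by
  set Φ : (I0 → R2 h) × (I1 → R4 h) × (I2 → R2 h) → (α → R2 h) × (β → R4 h) :=
    fun c => combo rows (liftCoef h c) with hΦ
  have hspan : rowSpan h rows = Set.range Φ := by
    ext v
    constructor
    · rintro ⟨d, rfl⟩
      refine ⟨(fun i => barR h (d (.inl i)), fun i => d (.inr (.inl i)),
        fun i => barR h (d (.inr (.inr i)))), ?_⟩
      rw [hΦ]
      refine (Finset.sum_congr rfl ?_).symm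
      rintro (i | i | i) _
      · exact smulStar_congr_tor (by rw [liftCoef, Sum.elim_inl, barR_iota hm]) (htor0 i)
      · rfl
      · exact smulStar_congr_tor
          (by rw [liftCoef, Sum.elim_inr, Sum.elim_inr, barR_iota hm]) (htor2 i)
    · rintro ⟨c, rfl⟩
      exact ⟨liftCoef h c, rfl⟩
  have e0 : ∀ c i, (Φ c).1 (q0 i) = c.1 i := by
    intro c i
    simp [hΦ, combo_fst, Fintype.sum_sum_type, liftCoef, barR_iota hm, hq00, hq0r,
      mul_ite, Finset.sum_ite_eq']
  have e1 : ∀ c i, (Φ c).2 (q1 i) = c.2.1 i := by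
    intro c i
    simp [hΦ, combo_snd, Fintype.sum_sum_type, liftCoef, hq10, hq11, hq12,
      mul_ite, Finset.sum_ite_eq']
  have e2 : ∀ c i, (Φ c).2 (q2 i)
      = (∑ x, c.2.1 x * (rows (.inr (.inl x))).2 (q2 i)) + iota h (c.2.2 i) * 2 := by
    intro c i
    simp [hΦ, combo_snd, Fintype.sum_sum_type, liftCoef, hq20, hq22,
      mul_ite, Finset.sum_ite_eq']
  have hinj : Function.Injective Φ := by
    intro c c' hcc
    have hc1 : c.1 = c'.1 := by
      funext i; rw [← e0 c i, ← e0 c' i, hcc]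
    have hc21 : c.2.1 = c'.2.1 := by
      funext i; rw [← e1 c i, ← e1 c' i, hcc]
    have hc22 : c.2.2 = c'.2.2 := by
      funext i
      have := (e2 c i).symm.trans ((congrArg (fun v : (α → R2 h) × (β → R4 h) => v.2 (q2 i)) hcc).trans (e2 c' i))
      rw [hc21] at this
      have h2 : iota h (c.2.2 i) * 2 = iota h (c'.2.2 i) * 2 := by
        exact add_left_cancel this
      refine ti_inj hm ?_
      rw [ti, ti]
      linear_combination h2
    exact Prod.ext hc1 (Prod.ext hc21 hc22)
  rw [hspan, Nat.card_range_of_injective hinj]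

end Combo


section Inner

variable {h : Z4[X]} {α β : Type*} [Fintype α] [Fintype β]

lemma innerP_eq (u v : (α → R2 h) × (β → R4 h)) :
    innerP h u v = ∑ i, ti h (u.1 i * v.1 i) + ∑ j, u.2 j * v.2 j := by
  rw [innerP, Finset.mul_sum]; rfl

variable (hm : h.Monic)
include hm

lemma innerP_add_right (u v w : (α → R2 h) × (β → R4 h)) :
    innerP h u (v + w) = innerP h u v + innerP h u w := by
  simp only [innerP_eq, Prod.fst_add, Prod.snd_add, Pi.add_apply, mul_add, ti_add hm,
    Finset.sum_add_distrib]
  ring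

lemma innerP_zero_right (u : (α → R2 h) × (β → R4 h)) : innerP h u 0 = 0 := by
  simp [innerP_eq, ti_zero hm]

lemma innerP_neg_right (u v : (α → R2 h) × (β → R4 h)) :
    innerP h u (-v) = -innerP h u v := by
  have h0 := innerP_add_right hm u (-v) v
  rw [neg_add_cancel, innerP_zero_right hm] at h0
  linear_combination -h0

lemma innerP_sub_right (u v w : (α → R2 h) × (β → R4 h)) :
    innerP h u (v - w) = innerP h u v - innerP h u w := by
  rw [sub_eq_add_neg, innerP_add_right hm, innerP_neg_right hm, ← sub_eq_add_neg]

lemma innerP_smul_right (γ : R4 h) (u v : (α → R2 h) × (β → R4 h)) :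
    innerP h u (smulStar h γ v) = γ * innerP h u v := by
  have h1 : ∀ i : α, ti h (u.1 i * (barR h γ * v.1 i)) = γ * ti h (u.1 i * v.1 i) := by
    intro i; rw [mul_left_comm, ti_mul_barR hm]
  have h2 : ∀ j : β, u.2 j * (γ * v.2 j) = γ * (u.2 j * v.2 j) := fun j => by ring
  simp only [innerP_eq, smulStar, h1, h2, ← Finset.mul_sum, mul_add]

lemma innerP_smul_left (γ : R4 h) (u v : (α → R2 h) × (β → R4 h)) :
    innerP h (smulStar h γ u) v = γ * innerP h u v := by
  have h1 : ∀ i : α, ti h (barR h γ * u.1 i * v.1 i) = γ * ti h (u.1 i * v.1 i) := by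
    intro i; rw [mul_assoc, ti_mul_barR hm]
  have h2 : ∀ j : β, γ * u.2 j * v.2 j = γ * (u.2 j * v.2 j) := fun j => by ring
  simp only [innerP_eq, smulStar, h1, h2, ← Finset.mul_sum, mul_add]

lemma innerP_add_left (u v w : (α → R2 h) × (β → R4 h)) :
    innerP h (u + v) w = innerP h u w + innerP h v w := by
  simp only [innerP_eq, Prod.fst_add, Prod.snd_add, Pi.add_apply, add_mul, ti_add hm,
    Finset.sum_add_distrib]
  ring

lemma innerP_zero_left (u : (α → R2 h) × (β → R4 h)) : innerP h 0 u = 0 := by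
  simp [innerP_eq, ti_zero hm]

lemma innerP_sum_right {γt : Type*} (s : Finset γt) (f : γt → (α → R2 h) × (β → R4 h))
    (u : (α → R2 h) × (β → R4 h)) :
    innerP h u (∑ i ∈ s, f i) = ∑ i ∈ s, innerP h u (f i) := by
  induction s using Finset.cons_induction with
  | empty => simp [innerP_zero_right hm]
  | cons a s ha ih => rw [Finset.sum_cons, innerP_add_right hm, ih, Finset.sum_cons]

lemma innerP_sum_left {γt : Type*} (s : Finset γt) (f : γt → (α → R2 h) × (β → R4 h))
    (u : (α → R2 h) × (β → R4 h)) :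
    innerP h (∑ i ∈ s, f i) u = ∑ i ∈ s, innerP h (f i) u := by
  induction s using Finset.cons_induction with
  | empty => simp [innerP_zero_left hm]
  | cons a s ha ih => rw [Finset.sum_cons, innerP_add_left hm, ih, Finset.sum_cons]

end Inner


section MainLemmas

variable {h : Z4[X]} {r s k0 k1 k2 : ℕ}
variable (A01b : Matrix (Fin k0) (Fin (r - k0)) (R2 h))
  (S : Matrix (Fin k1) (Fin (r - k0)) (R2 h))
  (T : Matrix (Fin k0) (Fin (s - k1 - k2)) (R4 h))
  (A01 : Matrix (Fin k1) (Fin k2) (R4 h))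
  (A02 : Matrix (Fin k1) (Fin (s - k1 - k2)) (R4 h))
  (A12 : Matrix (Fin k2) (Fin (s - k1 - k2)) (R4 h))
variable (hm : h.Monic)
include hm

lemma row_orthogonal (ρ : Fin k0 ⊕ Fin k1 ⊕ Fin k2)
    (σ : Fin (r - k0) ⊕ Fin (s - k1 - k2) ⊕ Fin k2) :
    innerP h (stdGenRows h A01b S T A01 A02 A12 ρ)
      (stdParityRows h A01b S T A01 A02 A12 σ) = 0 := by
  obtain i | i | i := ρ <;> obtain j | j | j := σ <;>
    simp only [innerP_eq, stdGenRows, stdParityRows, Fintype.sum_sum_type] <;>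
    simp [mul_ite, ite_mul, apply_ite (ti h), ti_zero hm, ti_neg hm, ti_barR hm,
      Finset.sum_ite_eq, Finset.sum_ite_eq', two_mul_two_R4]
  · rw [ti]; ring
  · have hswap : ∑ x : Fin k2, A01 i x * -A12 x j = -∑ c : Fin k2, A12 c j * A01 i c := by
      rw [← Finset.sum_neg_distrib]
      exact Finset.sum_congr rfl fun x _ => by ring
    rw [hswap]; ring
  · ring
  · ring

lemma inner_g0 (i : Fin k0)
    (w : ((Fin k0 ⊕ Fin (r - k0)) → R2 h) × ((Fin k1 ⊕ Fin k2 ⊕ Fin (s - k1 - k2)) → R4 h)) :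
    innerP h (stdGenRows h A01b S T A01 A02 A12 (.inl i)) w
      = ti h (w.1 (Sum.inl i)) + ∑ x, ti h (A01b i x * w.1 (Sum.inr x))
        + ∑ x, 2 * T i x * w.2 (Sum.inr (Sum.inr x)) := by
  simp [innerP_eq, stdGenRows, Fintype.sum_sum_type, mul_ite, ite_mul,
    apply_ite (ti h), ti_zero hm, Finset.sum_ite_eq, Finset.sum_ite_eq']

lemma inner_g1 (i : Fin k1)
    (w : ((Fin k0 ⊕ Fin (r - k0)) → R2 h) × ((Fin k1 ⊕ Fin k2 ⊕ Fin (s - k1 - k2)) → R4 h)) :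
    innerP h (stdGenRows h A01b S T A01 A02 A12 (.inr (.inl i))) w
      = ∑ x, ti h (S i x * w.1 (Sum.inr x)) + w.2 (Sum.inl i)
        + ∑ x, A01 i x * w.2 (Sum.inr (Sum.inl x))
        + ∑ x, A02 i x * w.2 (Sum.inr (Sum.inr x)) := by
  simp [innerP_eq, stdGenRows, Fintype.sum_sum_type, mul_ite, ite_mul,
    apply_ite (ti h), ti_zero hm, Finset.sum_ite_eq, Finset.sum_ite_eq']
  ring

lemma inner_g2 (i : Fin k2)
    (w : ((Fin k0 ⊕ Fin (r - k0)) → R2 h) × ((Fin k1 ⊕ Fin k2 ⊕ Fin (s - k1 - k2)) → R4 h)) :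
    innerP h (stdGenRows h A01b S T A01 A02 A12 (.inr (.inr i))) w
      = 2 * w.2 (Sum.inr (Sum.inl i)) + ∑ x, 2 * A12 i x * w.2 (Sum.inr (Sum.inr x)) := by
  simp [innerP_eq, stdGenRows, Fintype.sum_sum_type, mul_ite, ite_mul,
    apply_ite (ti h), ti_zero hm, Finset.sum_ite_eq, Finset.sum_ite_eq']

lemma dualCode_rowSpan :
    dualCode h (rowSpan h (stdGenRows h A01b S T A01 A02 A12))
      = rowSpan h (stdParityRows h A01b S T A01 A02 A12) := by
  classical
  set G := stdGenRows h A01b S T A01 A02 A12 with hG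
  set P := stdParityRows h A01b S T A01 A02 A12 with hP
  have hZ : ∀ (d : (Fin (r - k0) ⊕ Fin (s - k1 - k2) ⊕ Fin k2) → R4 h) ρ,
      innerP h (G ρ) (combo P d) = 0 := by
    intro d ρ
    rw [combo, innerP_sum_right hm]
    exact Finset.sum_eq_zero fun σ _ => by
      rw [innerP_smul_right hm, hG, hP, row_orthogonal A01b S T A01 A02 A12 hm ρ σ, mul_zero]
  ext v
  constructor
  · intro hv
    have hrow : ∀ ρ, innerP h (G ρ) v = 0 := by
      intro ρ
      refine hv _ ⟨fun ρ' => if ρ' = ρ then 1 else 0, ?_⟩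
      rw [Finset.sum_eq_single_of_mem ρ (Finset.mem_univ ρ)
        (fun b _ hb => by simp [hb, smulStar_zero])]
      simp [smulStar_one]
    set d1 : (Fin (r - k0) ⊕ Fin (s - k1 - k2) ⊕ Fin k2) → R4 h :=
      Sum.elim (fun j => iota h (v.1 (Sum.inr j)))
        (Sum.elim (fun j => v.2 (Sum.inr (Sum.inr j))) (fun _ => 0)) with hd1
    set w1 := v - combo P d1 with hw1def
    have c1f : ∀ j, (combo P d1).1 (Sum.inr j) = v.1 (Sum.inr j) := by
      intro j
      simp [combo_fst, Fintype.sum_sum_type, hd1, hP, stdParityRows, barR_iota hm,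
        mul_ite, ite_mul, Finset.sum_ite_eq, Finset.sum_ite_eq']
    have c2f : ∀ j, (combo P d1).2 (Sum.inr (Sum.inr j)) = v.2 (Sum.inr (Sum.inr j)) := by
      intro j
      simp [combo_snd, Fintype.sum_sum_type, hd1, hP, stdParityRows,
        mul_ite, ite_mul, Finset.sum_ite_eq, Finset.sum_ite_eq']
    have hz1a : ∀ j, w1.1 (Sum.inr j) = 0 := by
      intro j
      rw [hw1def, Prod.fst_sub, Pi.sub_apply, c1f, sub_self]
    have hz1b : ∀ j, w1.2 (Sum.inr (Sum.inr j)) = 0 := by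
      intro j
      rw [hw1def, Prod.snd_sub, Pi.sub_apply, c2f, sub_self]
    have hroww1 : ∀ ρ, innerP h (G ρ) w1 = 0 := by
      intro ρ
      rw [hw1def, innerP_sub_right hm, hrow, hZ, sub_zero]
    have h2t : ∀ i, 2 * w1.2 (Sum.inr (Sum.inl i)) = 0 := by
      intro i
      have hh := hroww1 (.inr (.inr i))
      rw [hG, inner_g2 A01b S T A01 A02 A12 hm] at hh
      simpa [hz1b] using hh
    choose m hm2 using fun i => exists_two_of_two_eq_zero hm (h2t i)
    set d2 : (Fin (r - k0) ⊕ Fin (s - k1 - k2) ⊕ Fin k2) → R4 h :=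
      Sum.elim (fun _ => 0) (Sum.elim (fun _ => 0) (fun i => iota h (barR h (m i)))) with hd2
    set w2 := w1 - combo P d2 with hw2def
    have e1 : ∀ a, (combo P d2).1 a = 0 := by
      intro a
      rcases a with j | j <;>
        simp [combo_fst, Fintype.sum_sum_type, hd2, hP, stdParityRows]
    have e2a : ∀ j, (combo P d2).2 (Sum.inr (Sum.inl j)) = 2 * m j := by
      intro j
      have : iota h (barR h (m j)) * 2 = 2 * m j := by
        rw [mul_comm, ← ti, ti_barR hm]
      simp [combo_snd, Fintype.sum_sum_type, hd2, hP, stdParityRows,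
        mul_ite, ite_mul, Finset.sum_ite_eq, Finset.sum_ite_eq', this]
    have e2b : ∀ j, (combo P d2).2 (Sum.inr (Sum.inr j)) = 0 := by
      intro j
      simp [combo_snd, Fintype.sum_sum_type, hd2, hP, stdParityRows]
    have hz2a : ∀ j, w2.1 (Sum.inr j) = 0 := by
      intro j
      rw [hw2def, Prod.fst_sub, Pi.sub_apply, e1, sub_zero]
      exact hz1a j
    have hz2b : ∀ j, w2.2 (Sum.inr (Sum.inr j)) = 0 := by
      intro j
      rw [hw2def, Prod.snd_sub, Pi.sub_apply, e2b, sub_zero]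
      exact hz1b j
    have hz2c : ∀ j, w2.2 (Sum.inr (Sum.inl j)) = 0 := by
      intro j
      rw [hw2def, Prod.snd_sub, Pi.sub_apply, e2a, hm2, sub_self]
    have hroww2 : ∀ ρ, innerP h (G ρ) w2 = 0 := by
      intro ρ
      rw [hw2def, innerP_sub_right hm, hroww1, hZ, sub_zero]
    have hz2d : ∀ i, w2.1 (Sum.inl i) = 0 := by
      intro i
      have hh := hroww2 (.inl i)
      rw [hG, inner_g0 A01b S T A01 A02 A12 hm] at hh
      simp only [hz2a, hz2b, mul_zero, ti_zero hm, Finset.sum_const_zero,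
        add_zero] at hh
      exact ti_inj hm (hh.trans (ti_zero hm).symm)
    have hz2e : ∀ i, w2.2 (Sum.inl i) = 0 := by
      intro i
      have hh := hroww2 (.inr (.inl i))
      rw [hG, inner_g1 A01b S T A01 A02 A12 hm] at hh
      simpa [hz2a, hz2b, hz2c, ti_zero hm] using hh
    have hw2zero : w2 = 0 := by
      refine Prod.ext ?_ ?_
      · funext a
        rcases a with j | j
        · exact hz2d j
        · exact hz2a j
      · funext b
        rcases b with j | j | j
        · exact hz2e j
        · exact hz2c j
        · exact hz2b j
    refine ⟨d1 + d2, ?_⟩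
    have hv2 : v = combo P d1 + combo P d2 := by
      have h0 : v - combo P d1 - combo P d2 = 0 := by
        rw [← hw1def, ← hw2def]; exact hw2zero
      have := eq_of_sub_eq_zero h0
      rw [sub_eq_iff_eq_add] at this
      rw [this]; abel
    rw [hv2, ← combo_add]
    rfl
  · rintro ⟨d, rfl⟩
    intro u hu
    obtain ⟨c, rfl⟩ := hu
    rw [innerP_sum_left hm]
    refine Finset.sum_eq_zero fun ρ _ => ?_
    rw [innerP_smul_left hm]
    have := hZ d ρ
    rw [show combo P d = ∑ i, smulStar h (d i) (P i) from rfl] at this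
    rw [this, mul_zero]

end MainLemmas


section Cards

lemma card_R4 {h : Z4[X]} (hm : h.Monic) : Nat.card (R4 h) = 4 ^ h.natDegree := by
  have e : Nat.card (R4 h) = Nat.card (Fin (AdjoinRoot.powerBasis' hm).dim → Z4) :=
    Nat.card_congr (AdjoinRoot.powerBasis' hm).basis.equivFun.toEquiv
  rw [e, Nat.card_fun, Nat.card_zmod, Nat.card_eq_fintype_card, Fintype.card_fin,
    AdjoinRoot.powerBasis'_dim]

lemma card_R2 {h : Z4[X]} (hm : h.Monic) : Nat.card (R2 h) = 2 ^ h.natDegree := by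
  have hmb : (h.map bar).Monic := hm.map bar
  have e : Nat.card (R2 h) = Nat.card (Fin (AdjoinRoot.powerBasis' hmb).dim → Z2) :=
    Nat.card_congr (AdjoinRoot.powerBasis' hmb).basis.equivFun.toEquiv
  rw [e, Nat.card_fun, Nat.card_zmod, Nat.card_eq_fintype_card, Fintype.card_fin]
  congr 1
  show (AdjoinRoot.powerBasis' hmb).dim = h.natDegree
  rw [AdjoinRoot.powerBasis'_dim, hm.natDegree_map]

lemma card_mixed {h : Z4[X]} {t : ℕ} (hm : h.Monic) (hdeg : h.natDegree = t) (a b c : ℕ) :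
    Nat.card ((Fin a → R2 h) × (Fin b → R4 h) × (Fin c → R2 h))
      = 2 ^ (t * (a + 2 * b + c)) := by
  rw [Nat.card_prod, Nat.card_prod, Nat.card_fun, Nat.card_fun, Nat.card_fun,
    card_R2 hm, card_R4 hm, hdeg, Nat.card_eq_fintype_card, Nat.card_eq_fintype_card,
    Nat.card_eq_fintype_card, Fintype.card_fin, Fintype.card_fin, Fintype.card_fin,
    show (4 : ℕ) = 2 ^ 2 from rfl, ← pow_mul, ← pow_mul, ← pow_mul, ← pow_mul,
    ← pow_add, ← pow_add]
  congr 1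
  ring

end Cards

/-- For a `Z₂Z₄[ξ]`-linear code of type `(r,s;k₀;k₁,k₂)`, with `ξ` a
root of an irreducible polynomial of degree `t`, one has `|C|·|C⊥| = 2^{t(r+2s)}`. -/
theorem card_mul_card_dual
    (t : ℕ) (ht : 1 ≤ t) (h : Z4[X]) (hbp : BasicPrimitive h t)
    (r s k0 k1 k2 : ℕ) (hr : 0 < r) (hs : 0 < s)
    (C : Set ((Fin r → R2 h) × (Fin s → R4 h))) (hC : IsZ2Z4Linear h C)
    (htype : IsTypeCode h r s k0 k1 k2 C) :
    Nat.card C * Nat.card (dualCode h C) = 2 ^ (t * (r + 2 * s)) := by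
  classical
  obtain ⟨hm, hdeg, -, -⟩ := hbp
  obtain ⟨A01b, S, T, A01, A02, A12, e2, e4, himg⟩ := htype
  set Gr := stdGenRows h A01b S T A01 A02 A12 with hGr
  set Pr := stdParityRows h A01b S T A01 A02 A12 with hPr
  have hPinner : ∀ u v : (Fin r → R2 h) × (Fin s → R4 h),
      innerP h (u.1 ∘ e2.symm, u.2 ∘ e4.symm) (v.1 ∘ e2.symm, v.2 ∘ e4.symm)
        = innerP h u v := by
    intro u v
    rw [innerP_eq, innerP_eq]
    congr 1
    · exact Equiv.sum_comp e2.symm (fun i => ti h (u.1 i * v.1 i))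
    · exact Equiv.sum_comp e4.symm (fun j => u.2 j * v.2 j)
  have hPinj : Function.Injective
      (fun v : (Fin r → R2 h) × (Fin s → R4 h) => (v.1 ∘ e2.symm, v.2 ∘ e4.symm)) := by
    intro a b hab
    have h1 := congrArg Prod.fst hab
    have h2 := congrArg Prod.snd hab
    simp only at h1 h2
    refine Prod.ext ?_ ?_
    · funext i
      have := congrFun h1 (e2 i)
      simpa using this
    · funext j
      have := congrFun h2 (e4 j)
      simpa using this
  have hPsurj : Function.Surjective
      (fun v : (Fin r → R2 h) × (Fin s → R4 h) => (v.1 ∘ e2.symm, v.2 ∘ e4.symm)) := by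
    intro w
    refine ⟨(w.1 ∘ e2, w.2 ∘ e4), ?_⟩
    refine Prod.ext ?_ ?_ <;> funext x <;> simp
  -- pivot/torsion facts for the generator rows
  have torg0 : ∀ (i : Fin k0) j, ∃ z, (Gr (.inl i)).2 j = 2 * z := by
    rintro i (j | j | j)
    · exact ⟨0, by show (0 : R4 h) = 2 * 0; ring⟩
    · exact ⟨0, by show (0 : R4 h) = 2 * 0; ring⟩
    · exact ⟨T i j, rfl⟩
  have torg2 : ∀ (i : Fin k2) j, ∃ z, (Gr (.inr (.inr i))).2 j = 2 * z := by
    rintro i (j | j | j)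
    · exact ⟨0, by show (0 : R4 h) = 2 * 0; ring⟩
    · exact ⟨if i = j then 1 else 0, by
        show (if i = j then 2 else 0 : R4 h) = 2 * (if i = j then 1 else 0)
        split <;> ring⟩
    · exact ⟨A12 i j, rfl⟩
  have cardC : Nat.card C = 2 ^ (t * (k0 + 2 * k1 + k2)) := by
    rw [← Nat.card_image_of_injective hPinj C, himg,
      card_rowSpan hm Gr torg0 torg2
        Sum.inl (fun i i' => rfl) (fun i ρ => by rcases ρ with x | x <;> rfl)
        Sum.inl (fun i i' => rfl) (fun i i' => rfl) (fun i i' => rfl)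
        (fun i => Sum.inr (Sum.inl i)) (fun i i' => rfl) (fun i i' => rfl)]
    exact card_mixed hm hdeg k0 k1 k2
  -- dual code
  have himgdual :
      (fun v : (Fin r → R2 h) × (Fin s → R4 h) => (v.1 ∘ e2.symm, v.2 ∘ e4.symm)) ''
        (dualCode h C) = dualCode h (rowSpan h Gr) := by
    rw [← himg]
    ext w
    constructor
    · rintro ⟨v, hv, rfl⟩ u hu
      obtain ⟨u0, hu0, rfl⟩ := hu
      exact (hPinner u0 v).trans (hv u0 hu0)
    · intro hw
      obtain ⟨v, rfl⟩ := hPsurj w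
      refine ⟨v, fun u hu => ?_, rfl⟩
      rw [← hPinner u v]
      exact hw _ ⟨u, hu, rfl⟩
  have torp0 : ∀ (i : Fin (r - k0)) j, ∃ z, (Pr (.inl i)).2 j = 2 * z := by
    rintro i (j | j | j)
    · exact ⟨-(iota h (S j i)), by
        show -(2 * iota h (S j i)) = 2 * -(iota h (S j i)); ring⟩
    · exact ⟨0, by show (0 : R4 h) = 2 * 0; ring⟩
    · exact ⟨0, by show (0 : R4 h) = 2 * 0; ring⟩
  have torp2 : ∀ (i : Fin k2) j, ∃ z, (Pr (.inr (.inr i))).2 j = 2 * z := by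
    rintro i (j | j | j)
    · exact ⟨-(A01 j i), by show -(2 * A01 j i) = 2 * -(A01 j i); ring⟩
    · exact ⟨if i = j then 1 else 0, by
        show (if i = j then 2 else 0 : R4 h) = 2 * (if i = j then 1 else 0)
        split <;> ring⟩
    · exact ⟨0, by show (0 : R4 h) = 2 * 0; ring⟩
  have cardD : Nat.card (dualCode h C)
      = 2 ^ (t * ((r - k0) + 2 * (s - k1 - k2) + k2)) := by
    rw [← Nat.card_image_of_injective hPinj (dualCode h C), himgdual,
      hGr, dualCode_rowSpan A01b S T A01 A02 A12 hm, ← hPr,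
      card_rowSpan hm Pr torp0 torp2
        Sum.inr (fun i i' => rfl) (fun i ρ => by rcases ρ with x | x <;> rfl)
        (fun i => Sum.inr (Sum.inr i)) (fun i i' => rfl) (fun i i' => rfl) (fun i i' => rfl)
        (fun i => Sum.inr (Sum.inl i)) (fun i i' => rfl) (fun i i' => rfl)]
    exact card_mixed hm hdeg _ _ _
  have h1 : r = k0 + (r - k0) := by simpa using Fintype.card_congr e2
  have h2 : s = k1 + (k2 + (s - k1 - k2)) := by simpa using Fintype.card_congr e4
  rw [cardC, cardD, ← pow_add, ← mul_add]
  have he : k0 + 2 * k1 + k2 + (r - k0 + 2 * (s - k1 - k2) + k2) = r + 2 * s := by omega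
  rw [he]
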